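/- Let (M,d) be a metric space. A transportation plan f = Σ_{i=1}^n a_i(1_{x_i} − 1_{y_i}) with a_i ≥ 0 is optimal (its cost equals ||f||_TC) if and only if there exists a 1-Lipschitz real-valued function l on M such that l(x_i) − l(y_i) = d(x_i, y_i) for every i with a_i > 0. -/

import Mathlib

/-- The transportation cost (Kantorovich–Rubinstein) norm of a finitely supported
zero-sum function `f` on a metric space: the infimum of costs of transportation
plans solving `f`. -/
noncomputable def tcCost {M : Type*} [MetricSpace M] (f : M →₀ ℝ) : ℝ :=
  sInf {c : ℝ | ∃ (n : ℕ) (a : Fin n → ℝ) (x y : Fin n → M),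
    (∀ i, 0 ≤ a i) ∧
    f = ∑ i, a i • (Finsupp.single (x i) 1 - Finsupp.single (y i) 1) ∧
    c = ∑ i, a i * dist (x i) (y i)}


namespace TCaux

variable {M : Type*} [MetricSpace M] {n : ℕ}

/-- Cost of a chain of "special edges" starting at point `p`. -/
def cCost (x y : Fin n → M) : M → List (Fin n) → ℝ
  | _, [] => 0
  | p, i :: L => dist p (x i) - dist (x i) (y i) + cCost x y (y i) L

/-- Cost of a chain closed back to `x i₀`. -/
def cyc (x y : Fin n → M) (i₀ : Fin n) : M → List (Fin n) → ℝ
  | p, [] => dist p (x i₀)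
  | p, i :: L => dist p (x i) - dist (x i) (y i) + cyc x y i₀ (y i) L

/-- Endpoint of a chain. -/
def endpt (y : Fin n → M) : M → List (Fin n) → M
  | p, [] => p
  | _, i :: L => endpt y (y i) L

lemma cyc_eq (x y : Fin n → M) (i₀ : Fin n) :
    ∀ (L : List (Fin n)) (p : M), cyc x y i₀ p L = cCost x y p L + dist (endpt y p L) (x i₀)
  | [], p => by simp [cyc, cCost, endpt]
  | i :: L, p => by
      simp only [cyc, cCost, endpt, cyc_eq x y i₀ L (y i)]; ring

lemma cCost_lip (x y : Fin n → M) :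
    ∀ (L : List (Fin n)) (p q : M), cCost x y p L ≤ dist p q + cCost x y q L
  | [], p, q => by simp [cCost, dist_nonneg]
  | i :: L, p, q => by
      simp only [cCost]
      have := dist_triangle p q (x i)
      linarith

lemma endpt_mem (y : Fin n → M) :
    ∀ (L : List (Fin n)) (i : Fin n), ∃ j, endpt y (y i) L = y j
  | [], i => ⟨i, rfl⟩
  | j :: L, _ => endpt_mem y L j

/-- Edges added along a cycle. -/
def added (x y : Fin n → M) (ε : ℝ) (i₀ : Fin n) : Fin n → List (Fin n) → List (ℝ × M × M)
  | i, [] => [(ε, x i₀, y i)]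
  | i, j :: L => (ε, x j, y i) :: added x y ε i₀ j L

lemma added_fst (x y : Fin n → M) (ε : ℝ) (i₀ : Fin n) :
    ∀ (L : List (Fin n)) (i : Fin n), ∀ e ∈ added x y ε i₀ i L, e.1 = ε
  | [], i => by simp [added]
  | j :: L, i => by
      simp only [added, List.mem_cons]
      rintro e (rfl | he)
      · rfl
      · exact added_fst x y ε i₀ L j e he

lemma added_finsupp_sum (x y : Fin n → M) (ε : ℝ) (i₀ : Fin n) :
    ∀ (L : List (Fin n)) (i : Fin n),
      ((added x y ε i₀ i L).map
          (fun e => e.1 • (Finsupp.single e.2.1 (1:ℝ) - Finsupp.single e.2.2 1))).sum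
      = ε • ((L.map (fun j => Finsupp.single (x j) (1:ℝ))).sum + Finsupp.single (x i₀) 1
          - Finsupp.single (y i) 1 - (L.map (fun j => Finsupp.single (y j) (1:ℝ))).sum)
  | [], i => by
      simp only [added, List.map_cons, List.map_nil, List.sum_cons, List.sum_nil]
      module
  | j :: L, i => by
      simp only [added, List.map_cons, List.sum_cons, added_finsupp_sum x y ε i₀ L j]
      module

lemma added_cost_sum (x y : Fin n → M) (ε : ℝ) (i₀ : Fin n) :
    ∀ (L : List (Fin n)) (i : Fin n),
      ((added x y ε i₀ i L).map (fun e => e.1 * dist e.2.1 e.2.2)).sum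
      = ε * (cyc x y i₀ (y i) L + (L.map (fun j => dist (x j) (y j))).sum)
  | [], i => by simp [added, cyc, dist_comm]
  | j :: L, i => by
      simp only [added, List.map_cons, List.sum_cons, added_cost_sum x y ε i₀ L j, cyc]
      rw [dist_comm (x j) (y i)]
      ring

lemma count_smul_sum {V : Type*} [AddCommMonoid V] [Module ℝ V] (v : Fin n → V) :
    ∀ (C : List (Fin n)), ∑ i, (C.count i : ℝ) • v i = (C.map v).sum
  | [] => by simp
  | j :: C => by
      simp only [List.count_cons, List.map_cons, List.sum_cons]
      push_cast
      rw [show (∑ i, ((C.count i : ℝ) + if (j == i) = true then 1 else 0) • v i)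
          = ∑ i, ((C.count i : ℝ) • v i + (if j = i then (1:ℝ) else 0) • v i) from
        Finset.sum_congr rfl (by intro i _; rw [add_smul]; simp [beq_iff_eq])]
      rw [Finset.sum_add_distrib, count_smul_sum v C]
      have : ∑ i, (if j = i then (1:ℝ) else 0) • v i = v j := by
        rw [Finset.sum_eq_single j] <;> simp +contextual [eq_comm]
      rw [this]; abel

lemma map_sub_sum {α : Type*} {V : Type*} [AddCommGroup V] (f g : α → V) :
    ∀ (L : List α), (L.map fun j => f j - g j).sum = (L.map f).sum - (L.map g).sum
  | [] => by simp
  | j :: L => by simp [map_sub_sum f g L]; abel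


/-- The set defining `tcCost`. -/
def tcSet {M : Type*} [MetricSpace M] (f : M →₀ ℝ) : Set ℝ :=
  {c : ℝ | ∃ (n : ℕ) (a : Fin n → ℝ) (x y : Fin n → M),
    (∀ i, 0 ≤ a i) ∧
    f = ∑ i, a i • (Finsupp.single (x i) 1 - Finsupp.single (y i) 1) ∧
    c = ∑ i, a i * dist (x i) (y i)}

lemma tcCost_eq {M : Type*} [MetricSpace M] (f : M →₀ ℝ) : tcCost f = sInf (tcSet f) := rfl

lemma tcSet_bddBelow {M : Type*} [MetricSpace M] (f : M →₀ ℝ) : BddBelow (tcSet f) := by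
  refine ⟨0, ?_⟩
  rintro c ⟨m, b, u, v, hb, -, rfl⟩
  exact Finset.sum_nonneg fun j _ => mul_nonneg (hb j) dist_nonneg

lemma list_map_sum_eq {α : Type*} {V : Type*} [AddCommMonoid V] (T : List α) (h : α → V) :
    (T.map h).sum = ∑ j : Fin T.length, h (T.get j) := by
  conv_lhs => rw [← List.ofFn_get T]
  rw [List.map_ofFn, List.sum_ofFn]
  simp

lemma tc_le_list {M : Type*} [MetricSpace M] (f : M →₀ ℝ) (T : List (ℝ × M × M))
    (hT : ∀ e ∈ T, 0 ≤ e.1)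
    (hf : f = (T.map fun e => e.1 • (Finsupp.single e.2.1 (1:ℝ) - Finsupp.single e.2.2 1)).sum) :
    tcCost f ≤ (T.map fun e => e.1 * dist e.2.1 e.2.2).sum := by
  refine csInf_le (tcSet_bddBelow f) ?_
  refine ⟨T.length, fun j => (T.get j).1, fun j => (T.get j).2.1, fun j => (T.get j).2.2,
    fun j => hT _ (T.get_mem j), ?_, ?_⟩
  · rw [hf, list_map_sum_eq]
  · rw [list_map_sum_eq]

lemma cycle_nonneg {M : Type*} [MetricSpace M] {n : ℕ} (a : Fin n → ℝ) (x y : Fin n → M)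
    (ha : ∀ i, 0 ≤ a i) (f : M →₀ ℝ)
    (hf : f = ∑ i, a i • (Finsupp.single (x i) 1 - Finsupp.single (y i) 1))
    (hopt : ∑ i, a i * dist (x i) (y i) = tcCost f) :
    ∀ (L : List (Fin n)) (i₀ : Fin n), 0 < a i₀ → (∀ j ∈ L, 0 < a j) →
      0 ≤ cyc x y i₀ (x i₀) (i₀ :: L) := by
  intro L i₀ h₀ hL
  by_contra hneg
  push_neg at hneg
  set C : List (Fin n) := i₀ :: L with hC
  have hCpos : ∀ j ∈ C, 0 < a j := by
    intro j hj
    rcases List.mem_cons.1 hj with rfl | hj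
    · exact h₀
    · exact hL j hj
  have hCne : C.toFinset.Nonempty := ⟨i₀, by simp [hC]⟩
  set μ := C.toFinset.inf' hCne a with hμ
  have hμpos : 0 < μ := by
    rw [hμ, Finset.lt_inf'_iff]
    intro j hj
    exact hCpos j (List.mem_toFinset.1 hj)
  have hlen0 : 0 < C.length := by simp [hC]
  have hlen : 0 < (C.length : ℝ) := by exact_mod_cast hlen0
  set ε := μ / C.length with hε
  have hεpos : 0 < ε := div_pos hμpos hlen
  -- the modified plan
  set T : List (ℝ × M × M) :=
    (List.ofFn fun i : Fin n => (a i - ε * (C.count i : ℝ), x i, y i)) ++ added x y ε i₀ i₀ L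
    with hT
  have hTpos : ∀ e ∈ T, 0 ≤ e.1 := by
    intro e he
    rcases List.mem_append.1 he with he | he
    · obtain ⟨i, rfl⟩ := List.mem_ofFn.1 he
      simp only
      rcases Nat.eq_zero_or_pos (C.count i) with h0 | hpos
      · simp [h0, ha i]
      · have hiC : i ∈ C := List.count_pos_iff.1 hpos
        have h1 : μ ≤ a i := Finset.inf'_le a (List.mem_toFinset.2 hiC)
        have h2 : (C.count i : ℝ) ≤ C.length := by exact_mod_cast (List.count_le_length (a := i) (l := C))
        have h3 : ε * (C.count i : ℝ) ≤ ε * C.length :=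
          mul_le_mul_of_nonneg_left h2 hεpos.le
        have h4 : ε * (C.length : ℝ) = μ := by
          rw [hε]; field_simp
        linarith
    · rw [added_fst x y ε i₀ L i₀ e he]
      exact hεpos.le
  -- sums over T
  have hsum_fs : f = (T.map fun e => e.1 • (Finsupp.single e.2.1 (1:ℝ)
      - Finsupp.single e.2.2 1)).sum := by
    rw [hT, List.map_append, List.sum_append, List.map_ofFn, List.sum_ofFn,
      added_finsupp_sum x y ε i₀ L i₀]
    have e1 : ∑ i : Fin n, ((fun e : ℝ × M × M => e.1 • (Finsupp.single e.2.1 (1:ℝ)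
          - Finsupp.single e.2.2 1)) ∘ fun i => (a i - ε * (C.count i : ℝ), x i, y i)) i
        = (∑ i, a i • (Finsupp.single (x i) (1:ℝ) - Finsupp.single (y i) 1))
          - ε • ∑ i, (C.count i : ℝ) • (Finsupp.single (x i) (1:ℝ) - Finsupp.single (y i) 1) := by
      rw [Finset.smul_sum, ← Finset.sum_sub_distrib]
      refine Finset.sum_congr rfl fun i _ => ?_
      simp only [Function.comp]
      rw [sub_smul, smul_smul]
    rw [e1, count_smul_sum, hC, List.map_cons, List.sum_cons,
      map_sub_sum (fun j => Finsupp.single (x j) (1:ℝ)) (fun j => Finsupp.single (y j) (1:ℝ)) L]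
    rw [hf]
    module
  have hsum_cost : (T.map fun e => e.1 * dist e.2.1 e.2.2).sum
      = (∑ i, a i * dist (x i) (y i)) + ε * cyc x y i₀ (x i₀) C := by
    rw [hT, List.map_append, List.sum_append, List.map_ofFn, List.sum_ofFn,
      added_cost_sum x y ε i₀ L i₀]
    have e1 : ∑ i : Fin n, ((fun e : ℝ × M × M => e.1 * dist e.2.1 e.2.2)
          ∘ fun i => (a i - ε * (C.count i : ℝ), x i, y i)) i
        = (∑ i, a i * dist (x i) (y i))
          - ε * ∑ i, (C.count i : ℝ) * dist (x i) (y i) := by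
      rw [Finset.mul_sum, ← Finset.sum_sub_distrib]
      refine Finset.sum_congr rfl fun i _ => ?_
      simp only [Function.comp]
      ring
    have e2 : ∑ i, (C.count i : ℝ) * dist (x i) (y i)
        = (C.map fun j => dist (x j) (y j)).sum := by
      have := count_smul_sum (V := ℝ) (fun j => dist (x j) (y j)) C
      simpa [smul_eq_mul] using this
    have e3 : cyc x y i₀ (x i₀) C = cyc x y i₀ (y i₀) L - dist (x i₀) (y i₀) := by
      rw [hC]
      show dist (x i₀) (x i₀) - dist (x i₀) (y i₀) + cyc x y i₀ (y i₀) L = _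
      rw [dist_self]; ring
    rw [e1, e2, hC, List.map_cons, List.sum_cons, e3]
    ring
  have hle : tcCost f ≤ (T.map fun e => e.1 * dist e.2.1 e.2.2).sum :=
    tc_le_list f T hTpos hsum_fs
  rw [hsum_cost, hopt] at hle
  nlinarith

lemma cCost_lb {M : Type*} [MetricSpace M] {n : ℕ} (a : Fin n → ℝ) (x y : Fin n → M)
    (hcyc : ∀ (L : List (Fin n)) (i₀ : Fin n), 0 < a i₀ → (∀ j ∈ L, 0 < a j) →
      0 ≤ cyc x y i₀ (x i₀) (i₀ :: L)) :
    ∀ (L : List (Fin n)) (p : M), (∀ j ∈ L, 0 < a j) →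
      -(∑ i, dist p (y i)) ≤ cCost x y p L := by
  intro L p hv
  match L with
  | [] =>
      show -(∑ i, dist p (y i)) ≤ 0
      simp only [neg_nonpos]
      exact Finset.sum_nonneg fun i _ => dist_nonneg
  | i :: L' =>
      have h0 : 0 < a i := hv i List.mem_cons_self
      have hv' : ∀ j ∈ L', 0 < a j := fun j hj => hv j (List.mem_cons_of_mem i hj)
      have hcycle := hcyc L' i h0 hv'
      have rel := cyc_eq x y i (i :: L') (x i)
      obtain ⟨j, hj⟩ := endpt_mem y L' i
      have hend : endpt y (x i) (i :: L') = y j := hj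
      rw [hend] at rel
      have hchain : cCost x y p (i :: L')
          = dist p (x i) + cCost x y (x i) (i :: L') := by
        show dist p (x i) - dist (x i) (y i) + cCost x y (y i) L'
          = dist p (x i) + (dist (x i) (x i) - dist (x i) (y i) + cCost x y (y i) L')
        rw [dist_self]; ring
      have htri : dist (y j) (x i) ≤ dist (y j) p + dist p (x i) := dist_triangle _ _ _
      have hsingle : dist p (y j) ≤ ∑ i', dist p (y i') :=
        Finset.single_le_sum (fun i' _ => dist_nonneg) (Finset.mem_univ j)
      have hd1 : dist (y j) p = dist p (y j) := dist_comm _ _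
      linarith

lemma exists_potential {M : Type*} [MetricSpace M] {n : ℕ} (a : Fin n → ℝ) (x y : Fin n → M)
    (hcyc : ∀ (L : List (Fin n)) (i₀ : Fin n), 0 < a i₀ → (∀ j ∈ L, 0 < a j) →
      0 ≤ cyc x y i₀ (x i₀) (i₀ :: L)) :
    ∃ l : M → ℝ, LipschitzWith 1 l ∧
      ∀ i, 0 < a i → l (x i) - l (y i) = dist (x i) (y i) := by
  set S : M → Set ℝ := fun p => {c | ∃ L, (∀ j ∈ L, 0 < a j) ∧ c = cCost x y p L} with hS
  have hne : ∀ p, (S p).Nonempty := fun p => ⟨0, [], by simp, rfl⟩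
  have hbdd : ∀ p, BddBelow (S p) := by
    intro p
    refine ⟨-(∑ i, dist p (y i)), ?_⟩
    rintro c ⟨L, hv, rfl⟩
    exact cCost_lb a x y hcyc L p hv
  set g : M → ℝ := fun p => sInf (S p) with hg
  have hlip : ∀ p q, g p ≤ dist p q + g q := by
    intro p q
    have h1 : ∀ c ∈ S q, g p - dist p q ≤ c := by
      rintro c ⟨L, hv, rfl⟩
      have h2 := cCost_lip x y L p q
      have h3 : cCost x y p L ∈ S p := ⟨L, hv, rfl⟩
      have h4 := csInf_le (hbdd p) h3
      linarith
    have := le_csInf (hne q) h1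
    linarith
  have hslack : ∀ i, 0 < a i → g (x i) + dist (x i) (y i) ≤ g (y i) := by
    intro i hi
    refine le_csInf (hne (y i)) ?_
    rintro c ⟨L, hv, rfl⟩
    have hv' : ∀ j ∈ (i :: L), 0 < a j := by
      intro j hj
      rcases List.mem_cons.1 hj with rfl | hj
      · exact hi
      · exact hv j hj
    have hmem : cCost x y (x i) (i :: L) ∈ S (x i) := ⟨i :: L, hv', rfl⟩
    have h5 := csInf_le (hbdd (x i)) hmem
    have h6 : cCost x y (x i) (i :: L)
        = dist (x i) (x i) - dist (x i) (y i) + cCost x y (y i) L := rfl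
    rw [dist_self] at h6
    linarith
  refine ⟨fun p => -(g p), ?_, ?_⟩
  · apply LipschitzWith.of_dist_le_mul
    intro p q
    rw [Real.dist_eq, NNReal.coe_one, one_mul, abs_sub_le_iff]
    have h1 := hlip p q
    have h2 := hlip q p
    have h3 : dist q p = dist p q := dist_comm _ _
    constructor <;> linarith
  · intro i hi
    have h1 := hslack i hi
    have h2 := hlip (y i) (x i)
    have h3 : dist (y i) (x i) = dist (x i) (y i) := dist_comm _ _
    have : -(g (x i)) - -(g (y i)) = g (y i) - g (x i) := by ring
    rw [this]
    linarith

lemma pairing_eq {M : Type*} [MetricSpace M] (l : M → ℝ) (f : M →₀ ℝ)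
    {m : ℕ} (b : Fin m → ℝ) (u v : Fin m → M)
    (hplan : f = ∑ j, b j • (Finsupp.single (u j) 1 - Finsupp.single (v j) 1)) :
    Finsupp.linearCombination ℝ l f = ∑ j, b j * (l (u j) - l (v j)) := by
  rw [hplan, map_sum]
  refine Finset.sum_congr rfl fun j _ => ?_
  rw [map_smul, map_sub, Finsupp.linearCombination_single, Finsupp.linearCombination_single,
    one_smul, one_smul, smul_eq_mul]

end TCaux


/-- A transportation plan `f = Σ aᵢ(1_{xᵢ} − 1_{yᵢ})`, `aᵢ ≥ 0`, is optimal (its cost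
equals `tcCost f`) if and only if there is a `1`-Lipschitz function `l : M → ℝ` with
`l (xᵢ) − l (yᵢ) = d(xᵢ, yᵢ)` whenever `aᵢ > 0`. -/
theorem optimal_plan_iff_lipschitz_witness {M : Type*} [MetricSpace M]
    (n : ℕ) (a : Fin n → ℝ) (x y : Fin n → M) (ha : ∀ i, 0 ≤ a i)
    (f : M →₀ ℝ)
    (hf : f = ∑ i, a i • (Finsupp.single (x i) 1 - Finsupp.single (y i) 1)) :
    (∑ i, a i * dist (x i) (y i) = tcCost f) ↔
      ∃ l : M → ℝ, LipschitzWith 1 l ∧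
        ∀ i, 0 < a i → l (x i) - l (y i) = dist (x i) (y i) := by
  have hmem : (∑ i, a i * dist (x i) (y i)) ∈ TCaux.tcSet f := ⟨n, a, x, y, ha, hf, rfl⟩
  constructor
  · intro hopt
    exact TCaux.exists_potential a x y (TCaux.cycle_nonneg a x y ha f hf hopt)
  · rintro ⟨l, hl, hsl⟩
    have hsub_le : ∀ p q : M, l p - l q ≤ dist p q := by
      intro p q
      have h1 := hl.dist_le_mul p q
      rw [NNReal.coe_one, one_mul, Real.dist_eq] at h1
      calc l p - l q ≤ |l p - l q| := le_abs_self _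
        _ ≤ dist p q := h1
    have hPf : Finsupp.linearCombination ℝ l f = ∑ i, a i * dist (x i) (y i) := by
      rw [TCaux.pairing_eq l f a x y hf]
      refine Finset.sum_congr rfl fun i _ => ?_
      rcases (ha i).eq_or_lt with h0 | h0
      · rw [← h0, zero_mul, zero_mul]
      · rw [hsl i h0]
    refine le_antisymm ?_ (csInf_le (TCaux.tcSet_bddBelow f) hmem)
    refine le_csInf ⟨_, hmem⟩ ?_
    rintro c ⟨m, b, u, v, hb, hplan, rfl⟩
    rw [← hPf, TCaux.pairing_eq l f b u v hplan]
    refine Finset.sum_le_sum fun j _ => ?_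
    exact mul_le_mul_of_nonneg_left (hsub_le (u j) (v j)) (hb j)
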